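/- Let m and n be positive integers and let a, b, c be real numbers such that none of a, b, c, a−c, b−c, a+b−c is an integer. Then Σ_{k=0}^{m} [(−m)_k (a)_k (b)_k] / [(c)_k (a+b+n−m−c)_k · k!] = (−1)^{n+1} · [Γ(c)·Γ(1−c+a)·Γ(b+n−1)·Γ(1+m−n−b+c)·Γ(n−m+b−c+a)] / [Γ(m+c)·Γ(1−c+a−m)·Γ(c−b)·Γ(b−c+a+n)·Γ(b)] · Σ_{k=0}^{n−1} [(1−n)_k (1−c+a)_k (1−m−c)_k] / [(2−b−n)_k (1−c+a−m)_k · k!]. For n = 1 this reduces to the Saalschütz theorem. -/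

import Mathlib

open scoped BigOperators
open Finset

/-- Pochhammer (ascending factorial) `(x)_k = x (x+1) ⋯ (x+k-1)`. -/
noncomputable def poch (x : ℝ) (k : ℕ) : ℝ := Polynomial.eval x (ascPochhammer ℝ k)

lemma poch_zero (x : ℝ) : poch x 0 = 1 := by simp [poch]

lemma poch_succ (x : ℝ) (k : ℕ) : poch x (k + 1) = poch x k * (x + k) := by
  simp [poch, ascPochhammer_succ_right]

lemma poch_succ_left (x : ℝ) (k : ℕ) : poch x (k + 1) = x * poch (x + 1) k := by
  simp [poch, ascPochhammer_succ_left, Polynomial.eval_comp]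

lemma poch_add (x : ℝ) (i j : ℕ) : poch x (i + j) = poch x i * poch (x + i) j := by
  induction j with
  | zero => simp [poch_zero]
  | succ j ih => rw [← add_assoc, poch_succ, ih, poch_succ]; push_cast; ring

lemma poch_ne_zero (x : ℝ) (k : ℕ) (h : ∀ i : ℕ, i < k → x + i ≠ 0) : poch x k ≠ 0 := by
  induction k with
  | zero => simp [poch_zero]
  | succ k ih =>
      rw [poch_succ]
      exact mul_ne_zero (ih fun i hi => h i (by omega)) (h k (by omega))

lemma poch_reflect (x : ℝ) (k : ℕ) : poch x k = (-1) ^ k * poch (1 - x - k) k := by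
  induction k with
  | zero => simp [poch_zero]
  | succ k ih =>
      rw [poch_succ, ih]
      have : poch (1 - x - (k + 1 : ℕ)) (k + 1) = (1 - x - (k + 1 : ℕ)) * poch (1 - x - k) k := by
        rw [poch_succ_left]; push_cast; ring_nf
      rw [this]; push_cast; ring

lemma poch_nat_factorial (s t : ℕ) : poch ((s : ℝ) + 1) t * (s.factorial : ℝ) = ((s + t).factorial : ℝ) := by
  induction t with
  | zero => simp [poch_zero]
  | succ t ih =>
      rw [poch_succ]
      have : ((s + (t+1)).factorial : ℝ) = ((s + t).factorial : ℝ) * ((s : ℝ) + t + 1) := by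
        have : s + (t+1) = (s+t) + 1 := by omega
        rw [this, Nat.factorial_succ]; push_cast; ring
      rw [this, ← ih]; ring

/-- `(-(N:ℝ))_k = (-1)^k N!/(N-k)!` for `k ≤ N`. -/
lemma poch_neg_nat (N k : ℕ) (h : k ≤ N) :
    poch (-(N : ℝ)) k * ((N - k).factorial : ℝ) = (-1) ^ k * (N.factorial : ℝ) := by
  rw [poch_reflect]
  have h1 : (1 : ℝ) - (-(N:ℝ)) - k = ((N - k : ℕ) : ℝ) + 1 := by
    have : ((N - k : ℕ) : ℝ) = (N : ℝ) - k := by push_cast [Nat.cast_sub h]; ring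
    rw [this]; ring
  rw [h1, mul_assoc, poch_nat_factorial]
  have : N - k + k = N := by omega
  rw [this]

lemma fact_ne_zero (k : ℕ) : (k.factorial : ℝ) ≠ 0 := Nat.cast_ne_zero.mpr k.factorial_ne_zero

/-- Chu–Vandermonde. -/
lemma vandermonde (N : ℕ) (x y : ℝ) (hy : ∀ i : ℕ, i < N → y + i ≠ 0) :
    ∑ k ∈ range (N + 1), poch (-(N : ℝ)) k * poch x k / (poch y k * (k.factorial : ℝ)) =
      poch (y - x) N / poch y N := by
  induction N generalizing x y with
  | zero => simp [poch_zero]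
  | succ N ih =>
      have hy0 : y ≠ 0 := by have := hy 0 (by omega); simpa using this
      have hyN : y + N ≠ 0 := hy N (by omega)
      have hpy : ∀ j : ℕ, j ≤ N → poch y j ≠ 0 :=
        fun j hj => poch_ne_zero _ _ fun i hi => hy i (by omega)
      have hy1 : ∀ i : ℕ, i < N → y + 1 + i ≠ 0 := by
        intro i hi h
        apply hy (i + 1) (by omega)
        push_cast
        linarith
      have hpy1 : ∀ j : ℕ, j ≤ N → poch (y + 1) j ≠ 0 :=
        fun j hj => poch_ne_zero _ _ fun i hi => hy1 i (by omega)
      have hext : ∑ k ∈ range (N + 1 + 1), poch (-(N : ℝ)) k * poch x k / (poch y k * (k.factorial : ℝ)) =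
          ∑ k ∈ range (N + 1), poch (-(N : ℝ)) k * poch x k / (poch y k * (k.factorial : ℝ)) := by
        rw [Finset.sum_range_succ]
        have : poch (-(N : ℝ)) (N + 1) = 0 := by
          rw [poch_succ]; simp
        rw [this]
        simp
      have key : ∑ k ∈ range (N + 1 + 1),
          poch (-((N + 1 : ℕ) : ℝ)) k * poch x k / (poch y k * (k.factorial : ℝ)) =
          (∑ k ∈ range (N + 1 + 1), poch (-(N : ℝ)) k * poch x k / (poch y k * (k.factorial : ℝ)))
          - (x / y) * ∑ j ∈ range (N + 1),
              poch (-(N : ℝ)) j * poch (x + 1) j / (poch (y + 1) j * (j.factorial : ℝ)) := by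
        rw [Finset.sum_range_succ' (fun k => poch (-((N + 1 : ℕ) : ℝ)) k * poch x k / (poch y k * (k.factorial : ℝ))) (N + 1),
            Finset.sum_range_succ' (fun k => poch (-(N : ℝ)) k * poch x k / (poch y k * (k.factorial : ℝ))) (N + 1),
            Finset.mul_sum]
        have h0 : poch (-((N + 1 : ℕ) : ℝ)) 0 * poch x 0 / (poch y 0 * ((Nat.factorial 0 : ℕ) : ℝ)) =
            poch (-(N : ℝ)) 0 * poch x 0 / (poch y 0 * ((Nat.factorial 0 : ℕ) : ℝ)) := by
          simp [poch_zero]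
        rw [h0]
        have main : ∑ k ∈ range (N + 1),
            poch (-((N + 1 : ℕ) : ℝ)) (k + 1) * poch x (k + 1) / (poch y (k + 1) * ((k + 1).factorial : ℝ)) =
            ∑ k ∈ range (N + 1), (poch (-(N : ℝ)) (k + 1) * poch x (k + 1) / (poch y (k + 1) * ((k + 1).factorial : ℝ))
              - x / y * (poch (-(N : ℝ)) k * poch (x + 1) k / (poch (y + 1) k * (k.factorial : ℝ)))) := by
          apply Finset.sum_congr rfl
          intro j hj
          rw [Finset.mem_range] at hj
          have hj' : j ≤ N := by omega
          have e1 : poch (-((N + 1 : ℕ) : ℝ)) (j + 1) = -((N : ℝ) + 1) * poch (-(N : ℝ)) j := by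
            rw [poch_succ_left]; push_cast; ring_nf
          have e2 : poch (-(N : ℝ)) (j + 1) = poch (-(N : ℝ)) j * (-(N : ℝ) + j) := poch_succ _ _
          have e3 : poch x (j + 1) = x * poch (x + 1) j := poch_succ_left _ _
          have e4 : poch y (j + 1) = y * poch (y + 1) j := poch_succ_left _ _
          have e5 : ((j + 1).factorial : ℝ) = ((j : ℝ) + 1) * (j.factorial : ℝ) := by
            rw [Nat.factorial_succ]; push_cast; ring
          rw [e1, e2, e3, e4, e5]
          have hj1 : ((j : ℝ) + 1) ≠ 0 := by positivity
          have h6 := hpy1 j hj'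
          have h7 := fact_ne_zero j
          field_simp
          ring
        rw [main, Finset.sum_sub_distrib]
        ring
      rw [key, hext, ih x y (fun i hi => hy i (by omega)),
          ih (x + 1) (y + 1) (fun i hi => hy1 i hi)]
      have e6 : y + 1 - (x + 1) = y - x := by ring
      rw [e6]
      have e7 : poch (y - x) (N + 1) = poch (y - x) N * (y - x + N) := poch_succ _ _
      have e8 : poch y (N + 1) = poch y N * (y + N) := poch_succ _ _
      have e9 : y * poch (y + 1) N = poch y N * (y + N) := by
        rw [← poch_succ_left, poch_succ]
      have hpyN := hpy N le_rfl
      have e10 : poch (y + 1) N = poch y N * (y + N) / y := by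
        field_simp
        linarith [e9]
      rw [e7, e8, e10]
      field_simp
      ring

/-- Vandermonde for rising factorials: `(X+Y)_N = Σ C(N,r) (X)_r (Y)_{N-r}`. -/
lemma poch_add_eq_sum (X Y : ℝ) (N : ℕ) :
    poch (X + Y) N = ∑ r ∈ range (N + 1), (N.choose r : ℝ) * poch X r * poch Y (N - r) := by
  induction N with
  | zero => simp [poch_zero]
  | succ N ih =>
      rw [Finset.sum_range_succ' (fun r => ((N + 1).choose r : ℝ) * poch X r * poch Y (N + 1 - r)) (N + 1)]
      have split : ∀ j ∈ range (N + 1), ((N + 1).choose (j + 1) : ℝ) * poch X (j + 1) * poch Y (N + 1 - (j + 1)) =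
          (N.choose j : ℝ) * poch X (j + 1) * poch Y (N - j) +
          (N.choose (j + 1) : ℝ) * poch X (j + 1) * poch Y (N - j) := by
        intro j hj
        rw [Nat.choose_succ_succ]
        have : N + 1 - (j + 1) = N - j := by omega
        rw [this]
        push_cast
        ring
      rw [Finset.sum_congr rfl split, Finset.sum_add_distrib]
      have A2 : ∑ j ∈ range (N + 1), (N.choose (j + 1) : ℝ) * poch X (j + 1) * poch Y (N - j) =
          ∑ r ∈ range (N + 1), (N.choose r : ℝ) * poch X r * poch Y (N + 1 - r) - poch Y (N + 1) := by
        rw [Finset.sum_range_succ' (fun r => (N.choose r : ℝ) * poch X r * poch Y (N + 1 - r)) N]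
        have zN : (N.choose (N + 1) : ℝ) * poch X (N + 1) * poch Y (N - N) = 0 := by
          simp [Nat.choose_succ_self]
        rw [Finset.sum_range_succ]
        have e : ∀ j, N + 1 - (j + 1) = N - j := fun j => by omega
        simp only [e, zN, Nat.choose_zero_right, poch_zero, Nat.cast_one, one_mul, mul_one,
          Nat.sub_zero, add_zero]
        ring
      rw [A2]
      have comb : ∑ j ∈ range (N + 1), (N.choose j : ℝ) * poch X (j + 1) * poch Y (N - j) +
          (∑ r ∈ range (N + 1), (N.choose r : ℝ) * poch X r * poch Y (N + 1 - r) - poch Y (N + 1)) +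
          ((N + 1).choose 0 : ℝ) * poch X 0 * poch Y (N + 1 - 0) =
          ∑ j ∈ range (N + 1), ((N.choose j : ℝ) * poch X (j + 1) * poch Y (N - j) +
            (N.choose j : ℝ) * poch X j * poch Y (N + 1 - j)) := by
        rw [Finset.sum_add_distrib]
        simp [poch_zero]
        ring
      rw [comb]
      have term : ∀ j ∈ range (N + 1), (N.choose j : ℝ) * poch X (j + 1) * poch Y (N - j) +
          (N.choose j : ℝ) * poch X j * poch Y (N + 1 - j) =
          ((N.choose j : ℝ) * poch X j * poch Y (N - j)) * (X + Y + N) := by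
        intro j hj
        rw [Finset.mem_range] at hj
        have hj' : j ≤ N := by omega
        have e1 : poch X (j + 1) = poch X j * (X + j) := poch_succ _ _
        have e2 : N + 1 - j = (N - j) + 1 := by omega
        have e3 : poch Y (N + 1 - j) = poch Y (N - j) * (Y + (N - j : ℕ)) := by
          rw [e2, poch_succ]
        have e4 : ((N - j : ℕ) : ℝ) = (N : ℝ) - j := by
          push_cast [Nat.cast_sub hj']; ring
        rw [e1, e3, e4]
        ring
      rw [Finset.sum_congr rfl term, ← Finset.sum_mul, ← ih, poch_succ]

lemma sum_triangle (M : ℕ) (f : ℕ → ℕ → ℝ) :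
    ∑ k ∈ range (M + 1), ∑ j ∈ range (k + 1), f k j =
    ∑ j ∈ range (M + 1), ∑ i ∈ range (M + 1 - j), f (j + i) j := by
  have h := Finset.sum_Ico_Ico_comm 0 (M + 1) (fun i j => f j i)
  simp only [← Finset.range_eq_Ico] at h
  rw [← h]
  apply Finset.sum_congr rfl
  intro j hj
  rw [Finset.sum_Ico_eq_sum_range]

lemma nonint_ne {t : ℝ} (ht : ∀ z : ℤ, t ≠ (z : ℝ)) (u : ℝ) (z : ℤ) (hu : u = t + z) : u ≠ 0 := by
  intro h
  apply ht (-z)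
  push_cast
  rw [hu] at h
  linarith

lemma nonint_Gamma_ne {t : ℝ} (ht : ∀ z : ℤ, t ≠ (z : ℝ)) (u : ℝ) (z : ℤ) (hu : u = t + z) :
    Real.Gamma u ≠ 0 := by
  apply Real.Gamma_ne_zero
  intro k h
  apply ht (-z - k)
  rw [hu] at h
  push_cast
  linarith

lemma Gamma_shift (x : ℝ) (k : ℕ) (h : ∀ i : ℕ, i < k → x + i ≠ 0) :
    Real.Gamma (x + k) = poch x k * Real.Gamma x := by
  induction k with
  | zero => simp [poch_zero]
  | succ k ih =>
      have e : x + ((k + 1 : ℕ) : ℝ) = (x + k) + 1 := by push_cast; ring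
      rw [e, Real.Gamma_add_one (h k (by omega)), ih (fun i hi => h i (by omega)), poch_succ]
      ring

/-- An `n`-balanced generalization of the Saalschütz theorem. -/
theorem saalschutz_n_balanced (m n : ℕ) (hm : 0 < m) (hn : 0 < n) (a b c : ℝ)
    (ha : ∀ z : ℤ, a ≠ (z : ℝ)) (hb : ∀ z : ℤ, b ≠ (z : ℝ)) (hc : ∀ z : ℤ, c ≠ (z : ℝ))
    (hac : ∀ z : ℤ, a - c ≠ (z : ℝ)) (hbc : ∀ z : ℤ, b - c ≠ (z : ℝ))
    (habc : ∀ z : ℤ, a + b - c ≠ (z : ℝ)) :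
    ∑ k ∈ range (m + 1),
        poch (-(m : ℝ)) k * poch a k * poch b k /
          (poch c k * poch (a + b + (n : ℝ) - (m : ℝ) - c) k * (k.factorial : ℝ)) =
      (-1 : ℝ) ^ (n + 1) *
          (Real.Gamma c * Real.Gamma (1 - c + a) * Real.Gamma (b + (n : ℝ) - 1) *
              Real.Gamma (1 + (m : ℝ) - (n : ℝ) - b + c) *
              Real.Gamma ((n : ℝ) - (m : ℝ) + b - c + a)) /
          (Real.Gamma ((m : ℝ) + c) * Real.Gamma (1 - c + a - (m : ℝ)) * Real.Gamma (c - b) *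
              Real.Gamma (b - c + a + (n : ℝ)) * Real.Gamma b) *
        ∑ k ∈ range n,
          poch (1 - (n : ℝ)) k * poch (1 - c + a) k * poch (1 - (m : ℝ) - c) k /
            (poch (2 - b - (n : ℝ)) k * poch (1 - c + a - (m : ℝ)) k * (k.factorial : ℝ)) := by
  obtain ⟨N, rfl⟩ : ∃ N, n = N + 1 := ⟨n - 1, by omega⟩
  -- abbreviations
  set D : ℝ := a + b + ((N + 1 : ℕ) : ℝ) - (m : ℝ) - c with hD
  have hE : (1 : ℝ) + b - (m : ℝ) - c = 1 + b - (m : ℝ) - c := rfl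
  set E : ℝ := 1 + b - (m : ℝ) - c with hEdef
  -- derived non-integrality facts
  have hcb : ∀ z : ℤ, c - b ≠ (z : ℝ) := fun z h => hbc (-z) (by push_cast; linarith)
  have hnb : ∀ z : ℤ, -b ≠ (z : ℝ) := fun z h => hb (-z) (by push_cast; linarith)
  -- nonvanishing of pochhammers
  have hc' : ∀ i : ℕ, c + (i : ℝ) ≠ 0 := fun i => nonint_ne hc _ i (by push_cast; ring)
  have hd' : ∀ i : ℕ, D + (i : ℝ) ≠ 0 := fun i =>
    nonint_ne habc _ ((N : ℤ) + 1 - m + i) (by rw [hD]; push_cast; ring)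
  have hE' : ∀ i : ℕ, E + (i : ℝ) ≠ 0 := fun i =>
    nonint_ne hbc _ (1 - (m : ℤ) + i) (by rw [hEdef]; push_cast; ring)
  have hA' : ∀ i : ℕ, (1 - c + a - (m : ℝ)) + (i : ℝ) ≠ 0 := fun i =>
    nonint_ne hac _ (1 - (m : ℤ) + i) (by push_cast; ring)
  have hB' : ∀ i : ℕ, (2 - b - ((N + 1 : ℕ) : ℝ)) + (i : ℝ) ≠ 0 := fun i =>
    nonint_ne hnb _ (1 - (N : ℤ) + i) (by push_cast; ring)
  have hpc : ∀ k : ℕ, poch c k ≠ 0 := fun k => poch_ne_zero _ _ fun i _ => hc' i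
  have hpd : ∀ k : ℕ, poch D k ≠ 0 := fun k => poch_ne_zero _ _ fun i _ => hd' i
  have hpE : ∀ k : ℕ, poch E k ≠ 0 := fun k => poch_ne_zero _ _ fun i _ => hE' i
  have hpA : ∀ k : ℕ, poch (1 - c + a - (m : ℝ)) k ≠ 0 := fun k =>
    poch_ne_zero _ _ fun i _ => hA' i
  have hpB : ∀ k : ℕ, poch (2 - b - ((N + 1 : ℕ) : ℝ)) k ≠ 0 := fun k =>
    poch_ne_zero _ _ fun i _ => hB' i
  have hpcs : ∀ j k : ℕ, poch (c + (j : ℝ)) k ≠ 0 := fun j k =>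
    poch_ne_zero _ _ fun i _ h => hc' (j + i) (by push_cast at h ⊢; linarith)
  -- Step 1: expand (a)_k/(D)_k by Chu-Vandermonde
  have step1 : ∑ k ∈ range (m + 1),
      poch (-(m : ℝ)) k * poch a k * poch b k /
        (poch c k * poch D k * (k.factorial : ℝ)) =
      ∑ k ∈ range (m + 1), ∑ j ∈ range (k + 1),
        (fun k j => poch (-(m : ℝ)) k * poch b k / (poch c k * (k.factorial : ℝ)) *
          (poch (-(k : ℝ)) j * poch (D - a) j / (poch D j * (j.factorial : ℝ)))) k j := by
    apply Finset.sum_congr rfl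
    intro k _
    simp only
    rw [← Finset.mul_sum, vandermonde k (D - a) D (fun i _ => hd' i),
      show D - (D - a) = a by ring]
    rw [div_mul_div_comm]
    ring
  -- Step 2: swap the triangle sum
  have step2 := sum_triangle m (fun k j => poch (-(m : ℝ)) k * poch b k / (poch c k * (k.factorial : ℝ)) *
          (poch (-(k : ℝ)) j * poch (D - a) j / (poch D j * (j.factorial : ℝ))))
  -- Step 3: evaluate the inner sum by Chu-Vandermonde
  have step3 : ∀ j, j ∈ range (m + 1) →
      ∑ i ∈ range (m + 1 - j),
        (fun k j => poch (-(m : ℝ)) k * poch b k / (poch c k * (k.factorial : ℝ)) *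
          (poch (-(k : ℝ)) j * poch (D - a) j / (poch D j * (j.factorial : ℝ)))) (j + i) j =
      (-1 : ℝ) ^ j * poch (-(m : ℝ)) j * poch b j * poch (D - a) j * poch (c - b) (m - j) /
        (poch c m * poch D j * (j.factorial : ℝ)) := by
    intro j hj
    rw [Finset.mem_range] at hj
    have hjm : j ≤ m := by omega
    have hsplit : m + 1 - j = (m - j) + 1 := by omega
    rw [hsplit]
    have hterm : ∀ i, i ∈ range ((m - j) + 1) →
        (fun k j => poch (-(m : ℝ)) k * poch b k / (poch c k * (k.factorial : ℝ)) *
          (poch (-(k : ℝ)) j * poch (D - a) j / (poch D j * (j.factorial : ℝ)))) (j + i) j =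
        ((-1 : ℝ) ^ j * poch (-(m : ℝ)) j * poch b j * poch (D - a) j /
          (poch c j * poch D j * (j.factorial : ℝ))) *
        (poch (-((m - j : ℕ) : ℝ)) i * poch (b + j) i / (poch (c + j) i * (i.factorial : ℝ))) := by
      intro i hi
      rw [Finset.mem_range] at hi
      simp only
      have c1 : poch (-(m : ℝ)) (j + i) = poch (-(m : ℝ)) j * poch (-((m - j : ℕ) : ℝ)) i := by
        rw [poch_add]
        have : -(m : ℝ) + j = -((m - j : ℕ) : ℝ) := by
          push_cast [Nat.cast_sub hjm]; ring
        rw [this]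
      have c2 : poch b (j + i) = poch b j * poch (b + j) i := poch_add b j i
      have c3 : poch c (j + i) = poch c j * poch (c + j) i := poch_add c j i
      have c4 : poch (-(((j + i : ℕ)) : ℝ)) j = (-1) ^ j * (((j + i).factorial : ℝ)) / ((i.factorial : ℝ)) := by
        rw [eq_div_iff (fact_ne_zero i)]
        have h := poch_neg_nat (j + i) j (by omega)
        rw [show j + i - j = i by omega] at h
        rw [h]
      have hji : (-((j + i : ℕ) : ℝ)) = -(((j : ℝ)) + i) := by push_cast; ring
      rw [c1, c2, c3]
      rw [show (-((j : ℝ) + i)) = -(((j + i : ℕ)) : ℝ) by push_cast; ring] at *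
      rw [c4]
      have f1 := fact_ne_zero (j + i)
      have f2 := fact_ne_zero i
      have f3 := fact_ne_zero j
      have p1 := hpc j
      have p2 := hpcs j i
      have p3 := hpd j
      field_simp
    rw [Finset.sum_congr rfl hterm, ← Finset.mul_sum,
      vandermonde (m - j) (b + j) (c + j) (fun i _ => by
        intro h
        exact hc' (j + i) (by push_cast at h ⊢; linarith)),
      show c + (j : ℝ) - (b + (j : ℝ)) = c - b by ring]
    have hcm : poch c j * poch (c + j) (m - j) = poch c m := by
      rw [← poch_add, show j + (m - j) = m by omega]
    have p1 := hpc j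
    have p2 := poch_ne_zero (c + (j:ℝ)) (m - j) (fun i _ => by
        intro h
        exact hc' (j + i) (by push_cast at h ⊢; linarith))
    have p3 := hpd j
    have p4 := fact_ne_zero j
    have p5 := hpc m
    field_simp
    rw [← hcm]; ring
  -- Step 4/5: reflection and shift of E-pochhammers
  have step45 : ∀ j, j ∈ range (m + 1) →
      (-1 : ℝ) ^ j * poch (-(m : ℝ)) j * poch b j * poch (D - a) j * poch (c - b) (m - j) /
        (poch c m * poch D j * (j.factorial : ℝ)) =
      (poch (c - b) m / (poch c m * poch E N)) *
        (poch (-(m : ℝ)) j * poch b j * poch (E + (j : ℝ)) N / (poch D j * (j.factorial : ℝ))) := by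
    intro j hj
    rw [Finset.mem_range] at hj
    have hjm : j ≤ m := by omega
    have rel2 : D - a = E + (N : ℝ) := by rw [hD, hEdef]; push_cast; ring
    have rel1 : poch (c - b) m = poch (c - b) (m - j) * ((-1 : ℝ) ^ j * poch E j) := by
      have t1 := poch_add (c - b) (m - j) j
      rw [show (m - j) + j = m by omega, poch_reflect (c - b + ((m - j : ℕ) : ℝ)) j,
        show 1 - (c - b + ((m - j : ℕ) : ℝ)) - (j : ℝ) = E by
          rw [hEdef]; push_cast [Nat.cast_sub hjm]; ring] at t1
      linear_combination t1
    have rel3 : poch E N * poch (E + (N : ℝ)) j = poch E j * poch (E + (j : ℝ)) N := by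
      have u1 := poch_add E N j
      have u2 := poch_add E j N
      rw [show N + j = j + N by omega] at u1
      rw [← u1, u2]
    rw [rel2, div_mul_div_comm, div_eq_div_iff
      (by exact mul_ne_zero (mul_ne_zero (hpc m) (hpd j)) (fact_ne_zero j))
      (by exact mul_ne_zero (mul_ne_zero (hpc m) (hpE N)) (mul_ne_zero (hpd j) (fact_ne_zero j)))]
    linear_combination (poch (-(m : ℝ)) j * poch b j * poch c m * poch D j * (j.factorial : ℝ) *
        (-1 : ℝ) ^ j * poch (c - b) (m - j)) * rel3 -
      (poch (-(m : ℝ)) j * poch b j * poch c m * poch D j * (j.factorial : ℝ) *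
        poch (E + (j : ℝ)) N) * rel1
  -- Step 6: expand (E+j)_N, swap sums, third Vandermonde
  have step6 : ∑ j ∈ range (m + 1),
      poch (-(m : ℝ)) j * poch b j * poch (E + (j : ℝ)) N / (poch D j * (j.factorial : ℝ)) =
      ∑ r ∈ range (N + 1), (N.choose r : ℝ) * poch b r * poch (1 - (m : ℝ) - c) (N - r) *
        (poch ((1 - c + a - (m : ℝ)) + ((N - r : ℕ) : ℝ)) m / poch D m) := by
    have expand : ∀ j, j ∈ range (m + 1) →
        poch (-(m : ℝ)) j * poch b j * poch (E + (j : ℝ)) N / (poch D j * (j.factorial : ℝ)) =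
        ∑ r ∈ range (N + 1), (N.choose r : ℝ) * poch (1 - (m : ℝ) - c) (N - r) *
          (poch (-(m : ℝ)) j * poch b j * poch (b + (j : ℝ)) r / (poch D j * (j.factorial : ℝ))) := by
      intro j _
      have e1 : poch (E + (j : ℝ)) N =
          ∑ r ∈ range (N + 1), (N.choose r : ℝ) * poch (b + (j : ℝ)) r * poch (1 - (m : ℝ) - c) (N - r) := by
        rw [← poch_add_eq_sum]
        congr 1
        rw [hEdef]; ring
      rw [e1, Finset.mul_sum, Finset.sum_div]
      apply Finset.sum_congr rfl
      intro r _
      ring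
    rw [Finset.sum_congr rfl expand, Finset.sum_comm]
    apply Finset.sum_congr rfl
    intro r hr
    rw [Finset.mem_range] at hr
    have hrN : r ≤ N := by omega
    have swap : ∀ j, j ∈ range (m + 1) →
        (N.choose r : ℝ) * poch (1 - (m : ℝ) - c) (N - r) *
          (poch (-(m : ℝ)) j * poch b j * poch (b + (j : ℝ)) r / (poch D j * (j.factorial : ℝ))) =
        ((N.choose r : ℝ) * poch (1 - (m : ℝ) - c) (N - r) * poch b r) *
          (poch (-(m : ℝ)) j * poch (b + (r : ℝ)) j / (poch D j * (j.factorial : ℝ))) := by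
      intro j _
      have hbr : poch b j * poch (b + (j : ℝ)) r = poch b r * poch (b + (r : ℝ)) j := by
        have u1 := poch_add b j r
        have u2 := poch_add b r j
        rw [show j + r = r + j by omega] at u1
        rw [← u1, u2]
      have f1 := hpd j
      have f2 := fact_ne_zero j
      field_simp
      linear_combination ((N.choose r : ℝ) * poch (1 - (m : ℝ) - c) (N - r) * poch (-(m : ℝ)) j) * hbr
    rw [Finset.sum_congr rfl swap, ← Finset.mul_sum, vandermonde m (b + (r : ℝ)) D (fun i _ => hd' i),
      show D - (b + (r : ℝ)) = (1 - c + a - (m : ℝ)) + ((N - r : ℕ) : ℝ) by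
        rw [hD]; push_cast [Nat.cast_sub hrN]; ring]
    ring
  -- Step 7: reverse the sum
  have step7 : ∑ r ∈ range (N + 1), (N.choose r : ℝ) * poch b r * poch (1 - (m : ℝ) - c) (N - r) *
        (poch ((1 - c + a - (m : ℝ)) + ((N - r : ℕ) : ℝ)) m / poch D m) =
      ∑ k ∈ range (N + 1), (N.choose k : ℝ) * poch b (N - k) * poch (1 - (m : ℝ) - c) k *
        (poch ((1 - c + a - (m : ℝ)) + (k : ℝ)) m / poch D m) := by
    rw [← Finset.sum_range_reflect]
    apply Finset.sum_congr rfl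
    intro k hk
    rw [Finset.mem_range] at hk
    have hkN : k ≤ N := by omega
    rw [show N + 1 - 1 - k = N - k by omega, Nat.choose_symm hkN,
      show N - (N - k) = k by omega]
  -- key Gamma identity
  have gkey : Real.Gamma (1 + (m : ℝ) - ((N + 1 : ℕ) : ℝ) - b + c) * poch E N =
      (-1 : ℝ) ^ (N + 1 + 1) * poch (c - b) m * Real.Gamma (c - b) := by
    by_cases hcase : N ≤ m
    · have e : (1 : ℝ) + (m : ℝ) - ((N + 1 : ℕ) : ℝ) - b + c = (c - b) + ((m - N : ℕ) : ℝ) := by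
        push_cast [Nat.cast_sub hcase]; ring
      rw [e, Gamma_shift (c - b) (m - N) (fun i _ => nonint_ne hcb _ i (by push_cast; ring))]
      have refl : poch E N = (-1 : ℝ) ^ N * poch ((c - b) + ((m - N : ℕ) : ℝ)) N := by
        rw [poch_reflect E N]
        congr 2
        rw [hEdef]; push_cast [Nat.cast_sub hcase]; ring
      have comb : poch (c - b) (m - N) * poch ((c - b) + ((m - N : ℕ) : ℝ)) N = poch (c - b) m := by
        rw [← poch_add, show (m - N) + N = m by omega]
      have sgn : (-1 : ℝ) ^ (N + 1 + 1) = (-1 : ℝ) ^ N := by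
        rw [pow_succ, pow_succ]; ring
      rw [refl, sgn]
      linear_combination ((-1 : ℝ) ^ N * Real.Gamma (c - b)) * comb
    · have hmN : m ≤ N := by omega
      have e : c - b = (1 + (m : ℝ) - ((N + 1 : ℕ) : ℝ) - b + c) + ((N - m : ℕ) : ℝ) := by
        push_cast [Nat.cast_sub hmN]; ring
      have gu : Real.Gamma (c - b) =
          poch (1 + (m : ℝ) - ((N + 1 : ℕ) : ℝ) - b + c) (N - m) *
            Real.Gamma (1 + (m : ℝ) - ((N + 1 : ℕ) : ℝ) - b + c) := by
        conv_lhs => rw [e]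
        exact Gamma_shift _ (N - m) (fun i _ =>
          nonint_ne hcb _ ((m : ℤ) - N + i) (by push_cast; ring))
      rw [gu]
      have split : poch E N = poch E m * poch (E + (m : ℝ)) (N - m) := by
        rw [← poch_add, show m + (N - m) = N by omega]
      have r1 : poch (c - b) m = (-1 : ℝ) ^ m * poch E m := by
        rw [poch_reflect (c - b) m]
        congr 2
        rw [hEdef]; push_cast; ring
      have r2 : poch (1 + (m : ℝ) - ((N + 1 : ℕ) : ℝ) - b + c) (N - m) =
          (-1 : ℝ) ^ (N - m) * poch (E + (m : ℝ)) (N - m) := by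
        rw [poch_reflect (1 + (m : ℝ) - ((N + 1 : ℕ) : ℝ) - b + c) (N - m)]
        congr 2
        rw [hEdef]; push_cast [Nat.cast_sub hmN]; ring
      have hone : (-1 : ℝ) ^ (N + 1 + 1) * ((-1 : ℝ) ^ m * (-1 : ℝ) ^ (N - m)) = 1 := by
        rw [← pow_add, ← pow_add, show N + 1 + 1 + (m + (N - m)) = 2 * (N + 1) by omega, pow_mul]
        norm_num
      rw [split, r1, r2]
      linear_combination (-(Real.Gamma (1 + (m : ℝ) - ((N + 1 : ℕ) : ℝ) - b + c)) *
        poch E m * poch (E + (m : ℝ)) (N - m)) * hone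
  -- Gamma prefactor to pochhammers
  have g1 : Real.Gamma ((m : ℝ) + c) = poch c m * Real.Gamma c := by
    rw [show (m : ℝ) + c = c + (m : ℝ) by ring]
    exact Gamma_shift c m (fun i _ => hc' i)
  have g2 : Real.Gamma (1 - c + a) = poch (1 - c + a - (m : ℝ)) m * Real.Gamma (1 - c + a - (m : ℝ)) := by
    conv_lhs => rw [show (1 : ℝ) - c + a = (1 - c + a - (m : ℝ)) + (m : ℝ) by ring]
    exact Gamma_shift _ m (fun i _ => hA' i)
  have g3 : Real.Gamma (b + ((N + 1 : ℕ) : ℝ) - 1) = poch b N * Real.Gamma b := by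
    rw [show b + ((N + 1 : ℕ) : ℝ) - 1 = b + (N : ℝ) by push_cast; ring]
    exact Gamma_shift b N (fun i _ => nonint_ne hb _ i (by push_cast; ring))
  have g4 : Real.Gamma (b - c + a + ((N + 1 : ℕ) : ℝ)) = poch D m * Real.Gamma D := by
    rw [show b - c + a + ((N + 1 : ℕ) : ℝ) = D + (m : ℝ) by rw [hD]; push_cast; ring]
    exact Gamma_shift D m (fun i _ => hd' i)
  have g5 : ((N + 1 : ℕ) : ℝ) - (m : ℝ) + b - c + a = D := by rw [hD]; push_cast; ring
  have n1 : Real.Gamma c ≠ 0 := nonint_Gamma_ne hc _ 0 (by push_cast; ring)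
  have n2 : Real.Gamma (1 - c + a - (m : ℝ)) ≠ 0 :=
    nonint_Gamma_ne hac _ (1 - (m : ℤ)) (by push_cast; ring)
  have n3 : Real.Gamma b ≠ 0 := nonint_Gamma_ne hb _ 0 (by push_cast; ring)
  have n4 : Real.Gamma D ≠ 0 := nonint_Gamma_ne habc _ ((N : ℤ) + 1 - m) (by rw [hD]; push_cast; ring)
  have n5 : Real.Gamma (c - b) ≠ 0 := nonint_Gamma_ne hcb _ 0 (by push_cast; ring)
  have gk' : Real.Gamma (1 + (m : ℝ) - ((N + 1 : ℕ) : ℝ) - b + c) =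
      (-1 : ℝ) ^ (N + 1 + 1) * poch (c - b) m * Real.Gamma (c - b) / poch E N := by
    rw [eq_div_iff (hpE N)]
    exact gkey
  have hsq : (-1 : ℝ) ^ (N + 1 + 1) * (-1 : ℝ) ^ (N + 1 + 1) = 1 := by
    rw [← pow_add, show N + 1 + 1 + (N + 1 + 1) = 2 * (N + 2) by omega, pow_mul]
    norm_num
  have hPRE : (-1 : ℝ) ^ (N + 1 + 1) *
          (Real.Gamma c * Real.Gamma (1 - c + a) * Real.Gamma (b + ((N + 1 : ℕ) : ℝ) - 1) *
              Real.Gamma (1 + (m : ℝ) - ((N + 1 : ℕ) : ℝ) - b + c) *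
              Real.Gamma (((N + 1 : ℕ) : ℝ) - (m : ℝ) + b - c + a)) /
          (Real.Gamma ((m : ℝ) + c) * Real.Gamma (1 - c + a - (m : ℝ)) * Real.Gamma (c - b) *
              Real.Gamma (b - c + a + ((N + 1 : ℕ) : ℝ)) * Real.Gamma b) =
      poch (c - b) m * poch (1 - c + a - (m : ℝ)) m * poch b N /
        (poch c m * poch E N * poch D m) := by
    rw [g1, g2, g3, g4, g5]
    rw [div_eq_div_iff
      (by apply_rules [mul_ne_zero])
      (by apply_rules [mul_ne_zero])]
    linear_combination ((-1 : ℝ) ^ (N + 1 + 1) * Real.Gamma c * poch (1 - c + a - (m : ℝ)) m *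
        Real.Gamma (1 - c + a - (m : ℝ)) * poch b N * Real.Gamma b * Real.Gamma D *
        poch c m * poch D m) * gkey +
      (Real.Gamma c * poch (1 - c + a - (m : ℝ)) m * Real.Gamma (1 - c + a - (m : ℝ)) *
        poch b N * Real.Gamma b * Real.Gamma D * poch c m * poch D m * poch (c - b) m *
        Real.Gamma (c - b)) * hsq
  -- Step 8: termwise match
  have step8 : ∀ k, k ∈ range (N + 1) →
      (poch (c - b) m / (poch c m * poch E N)) *
        ((N.choose k : ℝ) * poch b (N - k) * poch (1 - (m : ℝ) - c) k *
          (poch ((1 - c + a - (m : ℝ)) + (k : ℝ)) m / poch D m)) =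
      (poch (c - b) m * poch (1 - c + a - (m : ℝ)) m * poch b N /
          (poch c m * poch E N * poch D m)) *
        (poch (1 - ((N + 1 : ℕ) : ℝ)) k * poch (1 - c + a) k * poch (1 - (m : ℝ) - c) k /
          (poch (2 - b - ((N + 1 : ℕ) : ℝ)) k * poch (1 - c + a - (m : ℝ)) k * (k.factorial : ℝ))) := by
    intro k hk
    rw [Finset.mem_range] at hk
    have hkN : k ≤ N := by omega
    have R1 : poch (1 - c + a - (m : ℝ)) k * poch ((1 - c + a - (m : ℝ)) + (k : ℝ)) m =
        poch (1 - c + a - (m : ℝ)) m * poch (1 - c + a) k := by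
      have u1 := poch_add (1 - c + a - (m : ℝ)) k m
      have u2 := poch_add (1 - c + a - (m : ℝ)) m k
      rw [show k + m = m + k by omega] at u1
      rw [show (1 - c + a - (m : ℝ)) + (m : ℝ) = 1 - c + a by push_cast; ring] at u2
      linear_combination u2 - u1
    have R2 : poch b N = poch b (N - k) * ((-1 : ℝ) ^ k * poch (2 - b - ((N + 1 : ℕ) : ℝ)) k) := by
      have u := poch_add b (N - k) k
      rw [show (N - k) + k = N by omega] at u
      rw [u, poch_reflect (b + ((N - k : ℕ) : ℝ)) k,
        show (1 : ℝ) - (b + ((N - k : ℕ) : ℝ)) - (k : ℝ) = 2 - b - ((N + 1 : ℕ) : ℝ) by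
          push_cast [Nat.cast_sub hkN]; ring]
    have R3 : poch (1 - ((N + 1 : ℕ) : ℝ)) k * (((N - k).factorial : ℝ)) =
        (-1 : ℝ) ^ k * (N.factorial : ℝ) := by
      rw [show (1 : ℝ) - ((N + 1 : ℕ) : ℝ) = -(N : ℝ) by push_cast; ring]
      exact poch_neg_nat N k hkN
    have R4 : ((N.choose k : ℕ) : ℝ) * (k.factorial : ℝ) * (((N - k).factorial : ℝ)) =
        (N.factorial : ℝ) := by
      exact_mod_cast Nat.choose_mul_factorial_mul_factorial hkN
    have sqk : (-1 : ℝ) ^ k * (-1 : ℝ) ^ k = 1 := by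
      rw [← pow_add, show k + k = 2 * k by omega, pow_mul]; norm_num
    have core' : ((N.choose k : ℝ) * poch b (N - k) * poch ((1 - c + a - (m : ℝ)) + (k : ℝ)) m *
          (poch (2 - b - ((N + 1 : ℕ) : ℝ)) k * poch (1 - c + a - (m : ℝ)) k * (k.factorial : ℝ))) *
          (((N - k).factorial : ℝ)) =
        (poch (1 - c + a - (m : ℝ)) m * poch b N *
          (poch (1 - ((N + 1 : ℕ) : ℝ)) k * poch (1 - c + a) k)) * (((N - k).factorial : ℝ)) := by
      linear_combination
        (poch b (N - k) * poch (2 - b - ((N + 1 : ℕ) : ℝ)) k * poch (1 - c + a - (m : ℝ)) k *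
          poch ((1 - c + a - (m : ℝ)) + (k : ℝ)) m) * R4 +
        (poch b (N - k) * poch (2 - b - ((N + 1 : ℕ) : ℝ)) k * (N.factorial : ℝ)) * R1 -
        (poch (1 - c + a - (m : ℝ)) m * poch (1 - c + a) k * poch (1 - ((N + 1 : ℕ) : ℝ)) k *
          (((N - k).factorial : ℝ))) * R2 -
        (poch (1 - c + a - (m : ℝ)) m * poch (1 - c + a) k * poch b (N - k) * (-1 : ℝ) ^ k *
          poch (2 - b - ((N + 1 : ℕ) : ℝ)) k) * R3 -
        (poch (1 - c + a - (m : ℝ)) m * poch (1 - c + a) k * poch b (N - k) *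
          poch (2 - b - ((N + 1 : ℕ) : ℝ)) k * (N.factorial : ℝ)) * sqk
    have core : (N.choose k : ℝ) * poch b (N - k) * poch ((1 - c + a - (m : ℝ)) + (k : ℝ)) m *
          (poch (2 - b - ((N + 1 : ℕ) : ℝ)) k * poch (1 - c + a - (m : ℝ)) k * (k.factorial : ℝ)) =
        poch (1 - c + a - (m : ℝ)) m * poch b N *
          (poch (1 - ((N + 1 : ℕ) : ℝ)) k * poch (1 - c + a) k) :=
      mul_right_cancel₀ (fact_ne_zero (N - k)) core'
    rw [mul_div_assoc', div_mul_div_comm, div_mul_div_comm, div_eq_div_iff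
      (by apply_rules [mul_ne_zero, hpc, hpE, hpd])
      (by apply_rules [mul_ne_zero, hpc, hpE, hpd, hpB, hpA, fact_ne_zero])]
    linear_combination (poch (c - b) m * poch (1 - (m : ℝ) - c) k *
      (poch c m * poch E N * poch D m)) * core
  -- Final assembly
  rw [step1, step2, Finset.sum_congr rfl step3, Finset.sum_congr rfl step45,
    ← Finset.mul_sum, step6, step7, hPRE, Finset.mul_sum, Finset.mul_sum]
  exact Finset.sum_congr rfl step8
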